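/- Along the proximal-point iteration w^{(t+1)} = (k − Q w^{(t)} + c w^{(t)})/(β + c), the sequence of objective values is monotonically non-increasing: f(w^{(t+1)}) ≤ f(w^{(t)}) for every t ≥ 0 and every starting point w^{(0)} ∈ ℝⁿ. -/

import Mathlib

open Matrix

/-- If all eigenvalues of a positive semidefinite real matrix are at most `c`,
then `c • 1 - Q` is positive semidefinite. -/
lemma aux_smul_one_sub_posSemidef {n : ℕ} (Q : Matrix (Fin n) (Fin n) ℝ)
    (hQ : Q.PosSemidef) (c : ℝ) (hc : ∀ i, hQ.isHermitian.eigenvalues i ≤ c) :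
    (c • (1 : Matrix (Fin n) (Fin n) ℝ) - Q).PosSemidef := by
  set U : Matrix (Fin n) (Fin n) ℝ := (hQ.isHermitian.eigenvectorUnitary : Matrix (Fin n) (Fin n) ℝ)
  have hU : U * star U = 1 := Matrix.mem_unitaryGroup_iff.mp hQ.isHermitian.eigenvectorUnitary.2
  have hdecomp : c • (1 : Matrix (Fin n) (Fin n) ℝ) - Q
      = U * diagonal (fun i => c - hQ.isHermitian.eigenvalues i) * Uᴴ := by
    have hQeq := hQ.isHermitian.spectral_theorem
    have : (diagonal (fun i => c - hQ.isHermitian.eigenvalues i) : Matrix (Fin n) (Fin n) ℝ)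
        = c • 1 - diagonal (RCLike.ofReal ∘ hQ.isHermitian.eigenvalues) := by
      rw [smul_one_eq_diagonal, ← diagonal_sub]
      rfl
    rw [Unitary.conjStarAlgAut_apply, Matrix.star_eq_conjTranspose] at hQeq
    rw [this, Matrix.mul_sub, Matrix.sub_mul, ← hQeq]
    congr 1
    rw [Matrix.mul_smul, Matrix.mul_one, Matrix.smul_mul, ← Matrix.star_eq_conjTranspose, hU]
  rw [hdecomp]
  exact (posSemidef_diagonal_iff.mpr (fun i => sub_nonneg.mpr (hc i))).mul_mul_conjTranspose_same U

/-- Along the proximal-point iteration w^{(t+1)} = (k − Q w^{(t)} + c w^{(t)})/(β + c),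
the sequence of objective values is monotonically non-increasing:
f(w^{(t+1)}) ≤ f(w^{(t)}) for every t and any starting point. -/
theorem ppa_objective_monotone
    (n : ℕ) (Q : Matrix (Fin n) (Fin n) ℝ) (hQ : Q.PosSemidef)
    (β : ℝ) (hβ : 0 < β) (k : Fin n → ℝ)
    (f : (Fin n → ℝ) → ℝ)
    (hf : ∀ w, f w = (1 / 2) * (w ⬝ᵥ (Q + β • 1).mulVec w) - w ⬝ᵥ k)
    (c : ℝ) (hc : ∀ i, hQ.isHermitian.eigenvalues i ≤ c)
    (w : ℕ → (Fin n → ℝ))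
    (hw : ∀ t, w (t + 1) = (β + c)⁻¹ • (k - Q.mulVec (w t) + c • w t)) :
    ∀ t, f (w (t + 1)) ≤ f (w t) := by
  intro t
  rcases Nat.eq_zero_or_pos n with hn | hn
  · subst hn
    have : w (t + 1) = w t := Subsingleton.elim _ _
    rw [this]
  -- n ≥ 1 : c ≥ 0 and β + c > 0
  have hc0 : 0 ≤ c := le_trans (hQ.eigenvalues_nonneg ⟨0, hn⟩) (hc ⟨0, hn⟩)
  have hβc : (0:ℝ) < β + c := by linarith
  set u := w t with hu
  set v := w (t + 1) with hv
  -- the defining equation for k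
  have hk : k = (β + c) • v + Q.mulVec u - c • u := by
    have h1 : (β + c) • v = k - Q.mulVec u + c • u := by
      rw [hv, hw t, smul_smul, mul_inv_cancel₀ hβc.ne', one_smul]
    rw [h1]; abel
  set d : Fin n → ℝ := v - u with hd
  -- scalar abbreviations
  have hQt : Qᵀ = Q := by
    rw [← conjTranspose_eq_transpose_of_trivial]; exact hQ.isHermitian.eq
  have hsymm : u ⬝ᵥ Q.mulVec v = v ⬝ᵥ Q.mulVec u := by
    rw [dotProduct_mulVec, ← Matrix.mulVec_transpose, hQt, dotProduct_comm]
  -- positivity facts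
  have hQd : d ⬝ᵥ Q.mulVec d ≤ c * (d ⬝ᵥ d) := by
    have := (aux_smul_one_sub_posSemidef Q hQ c hc).dotProduct_mulVec_nonneg d
    simp only [RCLike.re_to_real, star_trivial, sub_mulVec, dotProduct_sub,
      smul_mulVec, one_mulVec, dotProduct_smul, smul_eq_mul] at this
    linarith
  have hdd : 0 ≤ d ⬝ᵥ d := Finset.sum_nonneg fun i _ => mul_self_nonneg (d i)
  -- expand bilinear forms
  have hQdexp : d ⬝ᵥ Q.mulVec d
      = v ⬝ᵥ Q.mulVec v - 2 * (v ⬝ᵥ Q.mulVec u) + u ⬝ᵥ Q.mulVec u := by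
    simp only [hd, sub_mulVec, Matrix.mulVec_sub, sub_dotProduct, dotProduct_sub, hsymm]; ring
  have hddexp : d ⬝ᵥ d = v ⬝ᵥ v - 2 * (u ⬝ᵥ v) + u ⬝ᵥ u := by
    simp only [hd, sub_dotProduct, dotProduct_sub, dotProduct_comm v u]; ring
  -- expand f at u and v
  have hexp : ∀ x : Fin n → ℝ, f x = (1/2) * (x ⬝ᵥ Q.mulVec x) + (β/2) * (x ⬝ᵥ x) - x ⬝ᵥ k := by
    intro x
    rw [hf x, add_mulVec, smul_mulVec, one_mulVec, dotProduct_add, dotProduct_smul,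
      smul_eq_mul]
    ring
  have hku : u ⬝ᵥ k = (β + c) * (u ⬝ᵥ v) + u ⬝ᵥ Q.mulVec u - c * (u ⬝ᵥ u) := by
    rw [hk]; simp only [dotProduct_sub, dotProduct_add, dotProduct_smul, smul_eq_mul]
  have hkv : v ⬝ᵥ k = (β + c) * (v ⬝ᵥ v) + v ⬝ᵥ Q.mulVec u - c * (u ⬝ᵥ v) := by
    rw [hk]; simp only [dotProduct_sub, dotProduct_add, dotProduct_smul, smul_eq_mul,
      dotProduct_comm v u]
  rw [hexp u, hexp v, hku, hkv]
  nlinarith [hQd, hdd, hQdexp, hddexp]
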